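/- Let s₂ > 1 be real and set η = 1/s₂. Then 0 < η < 1, η ≥ (3 − s₂)/(s₂ + 1), and for every complex number s with |s| < 1, Re( (s − 1)(s − s₂)/(1 − η s) ) > 0. -/

import Mathlib

theorem multiplier_choice_inverse_root (s₂ : ℝ) (hs₂ : 1 < s₂) :
    0 < 1 / s₂ ∧ 1 / s₂ < 1 ∧ 1 / s₂ ≥ (3 - s₂) / (s₂ + 1) ∧
    ∀ s : ℂ, ‖s‖ < 1 →
      ((s - 1) * (s - (s₂ : ℂ)) / (1 - ((1 / s₂ : ℝ) : ℂ) * s)).re > 0 := by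
  have h0 : (0:ℝ) < s₂ := lt_trans one_pos hs₂
  refine ⟨by positivity, by rw [div_lt_one h0]; linarith, ?_, ?_⟩
  · rw [ge_iff_le, div_le_div_iff₀ (by linarith) h0]
    nlinarith [sq_nonneg (s₂ - 1)]
  · intro s hs
    have hs2C : (s₂:ℂ) ≠ 0 := by exact_mod_cast h0.ne'
    have hne : s - (s₂:ℂ) ≠ 0 := by
      intro h
      have : s = (s₂:ℂ) := by linear_combination h
      rw [this] at hs
      simp [Complex.norm_of_nonneg h0.le, abs_of_pos h0] at hs
      linarith
    have hden : (1 - ((1 / s₂ : ℝ) : ℂ) * s) ≠ 0 := by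
      push_cast
      intro h
      apply hne
      field_simp at h
      linear_combination -h
    have key : (s - 1) * (s - (s₂:ℂ)) / (1 - ((1 / s₂ : ℝ) : ℂ) * s)
        = (s₂:ℂ) * (1 - s) := by
      rw [div_eq_iff hden]
      push_cast
      field_simp
      ring
    rw [key]
    have hre : s.re < 1 := lt_of_le_of_lt (le_trans (le_abs_self _) (Complex.abs_re_le_norm s)) hs
    simp only [Complex.mul_re, Complex.ofReal_re, Complex.ofReal_im, Complex.sub_re,
      Complex.one_re, Complex.sub_im, Complex.one_im]
    nlinarith
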